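/- One-step invariant preservation: Let f be monotone submodular with f(∅) ≥ 0, α > 0, |T| = k, T ⊆ A, and suppose f(T) ≥ (α/(α+1))·f(A). Let u ∉ A satisfy Δ(u, T) ≥ (α/k)·f(T), and let T_new = T ∪ {u} \ {y*} where y* attains Δ(u, T), and A_new = A ∪ {u}. Then f(T_new) ≥ (α/(α+1))·f(A_new). -/
import Mathlib


def Submodular {Ω : Type*} [DecidableEq Ω] (f : Finset Ω → ℝ) : Prop :=
  ∀ S T : Finset Ω, S ⊆ T → ∀ x ∉ T, f (insert x T) - f T ≤ f (insert x S) - f S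

lemma lemB {Ω : Type*} [DecidableEq Ω] (f : Finset Ω → ℝ) (hsub : Submodular f) :
    ∀ T : Finset Ω, ∀ u, u ∉ T → f (insert u T) - f {u} ≤ f T - f ∅ := by
  intro T
  induction T using Finset.induction_on with
  | empty => intro u _; simp
  | @insert x T hx ih =>
    intro u hu
    have hux : u ≠ x := fun h => hu (h ▸ Finset.mem_insert_self x T)
    have huT : u ∉ T := fun h => hu (Finset.mem_insert_of_mem h)
    have hxuT : x ∉ insert u T := by
      simp only [Finset.mem_insert, not_or]
      exact ⟨fun h => hux h.symm, hx⟩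
    have h1 : f (insert x (insert u T)) - f (insert u T) ≤ f (insert x T) - f T :=
      hsub T (insert u T) (Finset.subset_insert _ _) x hxuT
    have h2 := ih u huT
    have h3 : insert u (insert x T) = insert x (insert u T) := Finset.insert_comm u x T
    rw [h3]
    linarith

lemma lemC {Ω : Type*} [DecidableEq Ω] (f : Finset Ω → ℝ) (hsub : Submodular f) :
    ∀ T : Finset Ω, ∀ u, u ∉ T →
      ∑ z ∈ T, (f (insert u T) - f (insert u (T.erase z))) ≤ f (insert u T) - f {u} := by
  intro T
  induction T using Finset.induction_on with
  | empty => intro u _; simp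
  | @insert x T hx ih =>
    intro u hu
    have hux : u ≠ x := fun h => hu (h ▸ Finset.mem_insert_self x T)
    have huT : u ∉ T := fun h => hu (Finset.mem_insert_of_mem h)
    rw [Finset.sum_insert hx, Finset.erase_insert hx]
    have key : ∀ z ∈ T,
        f (insert u (insert x T)) - f (insert u ((insert x T).erase z)) ≤
        f (insert u T) - f (insert u (T.erase z)) := by
      intro z hz
      have hzx : z ≠ x := fun h => hx (h ▸ hz)
      have hzu : z ≠ u := fun h => huT (h ▸ hz)
      have herase : (insert x T).erase z = insert x (T.erase z) :=
        Finset.erase_insert_of_ne hzx.symm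
      have hsubset : insert u (T.erase z) ⊆ insert u (insert x (T.erase z)) := by
        intro a ha
        rcases Finset.mem_insert.1 ha with h | h
        · exact Finset.mem_insert.2 (Or.inl h)
        · exact Finset.mem_insert.2 (Or.inr (Finset.mem_insert_of_mem h))
      have hznot : z ∉ insert u (insert x (T.erase z)) := by
        simp [Finset.mem_insert, hzu, hzx, Finset.notMem_erase]
      have hkey := hsub (insert u (T.erase z)) (insert u (insert x (T.erase z))) hsubset z hznot
      have e1 : insert z (insert u (insert x (T.erase z))) = insert u (insert x T) := by
        rw [Finset.insert_comm z u, Finset.insert_comm z x, Finset.insert_erase hz]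
      have e2 : insert z (insert u (T.erase z)) = insert u T := by
        rw [Finset.insert_comm z u, Finset.insert_erase hz]
      rw [herase]
      rw [e1, e2] at hkey
      linarith
    have hsumle := Finset.sum_le_sum key
    have hih := ih u huT
    linarith

theorem stmt_4 {Ω : Type*} [DecidableEq Ω] (f : Finset Ω → ℝ)
    (hsub : Submodular f) (hmono : Monotone f) (h0 : 0 ≤ f ∅)
    (α : ℝ) (hα : 0 < α) (k : ℕ) (hk : 0 < k)
    (T A : Finset Ω) (hTk : T.card = k) (hTA : T ⊆ A)
    (hinv : f T ≥ α / (α + 1) * f A)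
    (u : Ω) (hu : u ∉ A)
    (y : Ω) (hy : y ∈ T)
    (hmax : ∀ z ∈ T, f (insert u (T.erase z)) ≤ f (insert u (T.erase y)))
    (hthresh : f (insert u (T.erase y)) - f T ≥ α / k * f T) :
    f (insert u (T.erase y)) ≥ α / (α + 1) * f (insert u A) := by
  have huT : u ∉ T := fun h => hu (hTA h)
  have hk' : (0 : ℝ) < (k : ℝ) := by exact_mod_cast hk
  have hα1 : (0 : ℝ) < α + 1 := by linarith
  -- marginal over A smaller than over T
  have hg : f (insert u A) - f A ≤ f (insert u T) - f T := hsub T A hTA u hu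
  -- sum of swap losses bounded
  have hsum := lemC f hsub T u huT
  have hB := lemB f hsub T u huT
  -- each term is at least the minimum one (y maximizes the swapped value)
  have hmin : ∀ z ∈ T, f (insert u T) - f (insert u (T.erase y)) ≤
      f (insert u T) - f (insert u (T.erase z)) := fun z hz => by linarith [hmax z hz]
  have hcard := Finset.card_nsmul_le_sum T _ _ hmin
  rw [hTk, nsmul_eq_mul] at hcard
  have hm : f (insert u T) - f (insert u (T.erase y)) ≤ f T / k := by
    rw [le_div_iff₀ hk']
    nlinarith [hsum, hB, h0]
  -- D ≥ g - f T / k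
  have h1 : f (insert u (T.erase y)) - f T ≥ (f (insert u A) - f A) - f T / k := by
    linarith
  -- (α+1) * D ≥ α * g
  have h2 : (α + 1) * (f (insert u (T.erase y)) - f T) ≥ α * (f (insert u A) - f A) := by
    have ht : f (insert u (T.erase y)) - f T ≥ α / k * f T := hthresh
    have hdiv : α / k * f T = α * (f T / k) := by ring
    nlinarith [mul_le_mul_of_nonneg_left h1 (le_of_lt hα)]
  -- (α+1) * f T ≥ α * f A
  have h3 : (α + 1) * f T ≥ α * f A := by
    have := mul_le_mul_of_nonneg_left hinv (le_of_lt hα1)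
    have hc : (α + 1) * (α / (α + 1) * f A) = α * f A := by
      field_simp
    nlinarith
  rw [ge_iff_le, div_mul_eq_mul_div, div_le_iff₀ hα1]
  have hgoal : α * f (insert u A) = α * f A + α * (f (insert u A) - f A) := by ring
  nlinarith [h2, h3]
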